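/- Characterization of Enneper's surface (Chern–Ricci constant, V = (0,0,−1)): let U ⊆ ℂ be a nonempty connected open set, let (f, g) be Weierstrass data on U, and let X : U → ℝ³ satisfy ∂X/∂x = Re Φ and ∂X/∂y = −Im Φ on U, where Φ = (f(1 − g²)/2, i f(1 + g²)/2, f g). Assume there is a constant c > 0 with |f(z)| = c |g'(z)| for all z ∈ U (i.e. the Chern–Ricci function for V = (0, 0, −1), which equals ln(|f|/|g'|), is constant on U). Then X is a piece of Enneper's surface up to isometries and homotheties of ℝ³: there exist s > 0, a linear isometry A of ℝ³, a vector b ∈ ℝ³, and a holomorphic map φ : U → ℂ such that X(z) = s·A(E(φ(z))) + b for all z ∈ U, where E : ℂ → ℝ³ is Enneper's parametrization E(w) = (Re(w − w³/3), Re(i(w + w³/3)), Re(w²)). -/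

import Mathlib

/-- Enneper's parametrization `E : ℂ → ℝ³`,
`E(w) = (Re(w − w³/3), Re(i(w + w³/3)), Re(w²))`. -/
noncomputable def enneper (w : ℂ) : EuclideanSpace ℝ (Fin 3) :=
  (WithLp.equiv 2 (Fin 3 → ℝ)).symm
    ![(w - w ^ 3 / 3).re, (Complex.I * (w + w ^ 3 / 3)).re, (w ^ 2).re]

open Complex

section Aux
variable {E : Type*} [NormedAddCommGroup E] [NormedSpace ℝ E]

lemma clm_ext_complex {L₁ L₂ : ℂ →L[ℝ] E} (h1 : L₁ 1 = L₂ 1) (hI : L₁ I = L₂ I) : L₁ = L₂ := by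
  ext v
  have hv : v = v.re • (1 : ℂ) + v.im • I := by simp [Complex.real_smul]
  rw [hv, map_add, map_add, map_smul, map_smul, map_smul, map_smul, h1, hI]

lemma const_of_hasFDerivAt_zero {F : ℂ → E} {U : Set ℂ}
    (hU : IsOpen U) (hconn : IsPreconnected U)
    (h : ∀ z ∈ U, HasFDerivAt F (0 : ℂ →L[ℝ] E) z) {z₀ z : ℂ} (h0 : z₀ ∈ U) (hz : z ∈ U) :
    F z = F z₀ := by
  have hloc : ∀ w ∈ U, ∃ ε > 0, Metric.ball w ε ⊆ U ∧ ∀ y ∈ Metric.ball w ε, F y = F w := by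
    intro w hw
    obtain ⟨ε, hε, hball⟩ := Metric.isOpen_iff.1 hU w hw
    refine ⟨ε, hε, hball, fun y hy => ?_⟩
    refine (convex_ball w ε).is_const_of_fderivWithin_eq_zero (𝕜 := ℝ)
      (fun u hu => ((h u (hball hu)).differentiableAt).differentiableWithinAt)
      (fun u hu => ?_) hy (Metric.mem_ball_self hε)
    rw [fderivWithin_of_isOpen Metric.isOpen_ball hu, (h u (hball hu)).fderiv]
  set S : Set ℂ := {w | w ∈ U ∧ F w = F z₀} with hS
  set T : Set ℂ := {w | w ∈ U ∧ F w ≠ F z₀} with hT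
  have hSopen : IsOpen S := by
    rw [Metric.isOpen_iff]
    rintro w ⟨hwU, hwF⟩
    obtain ⟨ε, hε, hb, hcst⟩ := hloc w hwU
    exact ⟨ε, hε, fun y hy => ⟨hb hy, (hcst y hy).trans hwF⟩⟩
  have hTopen : IsOpen T := by
    rw [Metric.isOpen_iff]
    rintro w ⟨hwU, hwF⟩
    obtain ⟨ε, hε, hb, hcst⟩ := hloc w hwU
    exact ⟨ε, hε, fun y hy => ⟨hb hy, fun hc => hwF ((hcst y hy).symm.trans hc)⟩⟩
  by_contra hne
  have := hconn S T hSopen hTopen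
    (fun w hw => by by_cases hF : F w = F z₀
                    exacts [Or.inl ⟨hw, hF⟩, Or.inr ⟨hw, hF⟩])
    ⟨z₀, h0, h0, rfl⟩ ⟨z, hz, hz, hne⟩
  obtain ⟨y, _, ⟨_, h1⟩, ⟨_, h2⟩⟩ := this
  exact h2 h1

end Aux

noncomputable def rotL (a b : ℝ) : EuclideanSpace ℝ (Fin 3) →ₗ[ℝ] EuclideanSpace ℝ (Fin 3) where
  toFun x := (WithLp.equiv 2 (Fin 3 → ℝ)).symm ![a * x 0 - b * x 1, b * x 0 + a * x 1, x 2]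
  map_add' x y := by
    ext i
    fin_cases i <;>
      simp [WithLp.equiv_symm_apply, PiLp.toLp_apply, PiLp.add_apply] <;> ring
  map_smul' r x := by
    ext i
    fin_cases i <;>
      simp [WithLp.equiv_symm_apply, PiLp.toLp_apply, PiLp.smul_apply, smul_eq_mul] <;> ring

lemma rotL_comp (a b : ℝ) (hab : a ^ 2 + b ^ 2 = 1) (x : EuclideanSpace ℝ (Fin 3)) :
    rotL a b (rotL a (-b) x) = x := by
  ext i
  fin_cases i
  · simp [rotL, WithLp.equiv_symm_apply, PiLp.toLp_apply]; linear_combination x 0 * hab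
  · simp [rotL, WithLp.equiv_symm_apply, PiLp.toLp_apply]; linear_combination x 1 * hab
  · simp [rotL, WithLp.equiv_symm_apply, PiLp.toLp_apply]

noncomputable def rotIso (a b : ℝ) (hab : a ^ 2 + b ^ 2 = 1) :
    EuclideanSpace ℝ (Fin 3) ≃ₗᵢ[ℝ] EuclideanSpace ℝ (Fin 3) :=
  LinearEquiv.isometryOfInner
    (LinearEquiv.ofLinear (rotL a b) (rotL a (-b))
      (by ext x; exact congrFun (congrArg WithLp.ofLp (rotL_comp a b hab x)) _)
      (by ext x
          have := rotL_comp a (-b) (by linear_combination hab) x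
          simpa using congrFun (congrArg WithLp.ofLp this) _))
    (by
      intro x y
      simp only [LinearEquiv.ofLinear_apply, rotL, LinearMap.coe_mk, AddHom.coe_mk,
        PiLp.inner_apply, RCLike.inner_apply, conj_trivial, Fin.sum_univ_three,
        WithLp.equiv_symm_apply, PiLp.toLp_apply, Matrix.cons_val_zero, Matrix.cons_val_one, Matrix.head_cons,
        Matrix.cons_val_two, Matrix.tail_cons]
      linear_combination (x 0 * y 0 + x 1 * y 1) * hab)

lemma rotIso_apply (a b : ℝ) (hab : a ^ 2 + b ^ 2 = 1) (x : EuclideanSpace ℝ (Fin 3)) :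
    rotIso a b hab x =
      (WithLp.equiv 2 (Fin 3 → ℝ)).symm ![a * x 0 - b * x 1, b * x 0 + a * x 1, x 2] := rfl

noncomputable def reCLM3 (d : Fin 3 → ℂ) : ℂ →L[ℝ] EuclideanSpace ℝ (Fin 3) :=
  ((PiLp.continuousLinearEquiv 2 ℝ (fun _ : Fin 3 => ℝ)).symm :
      (Fin 3 → ℝ) →L[ℝ] EuclideanSpace ℝ (Fin 3)).comp
    (ContinuousLinearMap.pi fun j => Complex.reCLM.comp
      ((ContinuousLinearMap.smulRight (1 : ℂ →L[ℂ] ℂ) (d j)).restrictScalars ℝ))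

lemma reCLM3_apply (d : Fin 3 → ℂ) (v : ℂ) :
    reCLM3 d v = (WithLp.equiv 2 (Fin 3 → ℝ)).symm (fun j => (v * d j).re) := rfl

lemma hasFDerivAt_re3 {H : Fin 3 → ℂ → ℂ} {d : Fin 3 → ℂ} {z : ℂ}
    (h : ∀ j, HasDerivAt (H j) (d j) z) :
    HasFDerivAt (fun t => (WithLp.equiv 2 (Fin 3 → ℝ)).symm (fun j => (H j t).re))
      (reCLM3 d) z := by
  have hpi : HasFDerivAt (fun t => (fun j => (H j t).re))
      (ContinuousLinearMap.pi fun j => Complex.reCLM.comp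
        ((ContinuousLinearMap.smulRight (1 : ℂ →L[ℂ] ℂ) (d j)).restrictScalars ℝ)) z := by
    refine hasFDerivAt_pi.2 fun j => ?_
    exact Complex.reCLM.hasFDerivAt.comp z ((h j).hasFDerivAt.restrictScalars ℝ)
  exact ((PiLp.continuousLinearEquiv 2 ℝ (fun _ : Fin 3 => ℝ)).symm :
      (Fin 3 → ℝ) →L[ℝ] EuclideanSpace ℝ (Fin 3)).hasFDerivAt.comp z hpi


/-- Characterization of Enneper's surface; Chern–Ricci constant
for `V = (0,0,−1)`: let `U ⊆ ℂ` be a nonempty connected open set, `(f, g)`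
Weierstrass data on `U`, and `X : U → ℝ³` with `∂X/∂x = Re Φ`, `∂X/∂y = −Im Φ`
where `Φ = (f(1 − g²)/2, i f(1 + g²)/2, f g)`.  If there is a constant `c > 0`
with `|f| = c|g'|` on `U` (i.e. the Chern–Ricci function for `V = (0,0,−1)`,
which equals `ln(|f|/|g'|)`, is constant), then `X` is a piece of Enneper's
surface up to isometries and homotheties of `ℝ³`. -/
theorem enneper_characterization_chern_ricci_constant_south
    (U : Set ℂ) (hU : IsOpen U) (hUconn : IsConnected U)
    (f g : ℂ → ℂ)
    (hf : DifferentiableOn ℂ f U) (hg : DifferentiableOn ℂ g U)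
    (hf0 : ∀ z ∈ U, f z ≠ 0) (hg' : ∀ z ∈ U, deriv g z ≠ 0)
    (Φ : ℂ → Fin 3 → ℂ)
    (hΦ : ∀ z, Φ z = ![f z * (1 - g z ^ 2) / 2,
                        Complex.I * f z * (1 + g z ^ 2) / 2,
                        f z * g z])
    (X : ℂ → EuclideanSpace ℝ (Fin 3))
    (hXdiff : ∀ z ∈ U, DifferentiableAt ℝ X z)
    (hXx : ∀ z ∈ U, fderiv ℝ X z 1 =
      (WithLp.equiv 2 (Fin 3 → ℝ)).symm (fun i => (Φ z i).re))
    (hXy : ∀ z ∈ U, fderiv ℝ X z Complex.I =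
      (WithLp.equiv 2 (Fin 3 → ℝ)).symm (fun i => -(Φ z i).im))
    (c : ℝ) (hc : 0 < c)
    (hconst : ∀ z ∈ U, ‖f z‖ = c * ‖deriv g z‖) :
    ∃ (s : ℝ) (A : EuclideanSpace ℝ (Fin 3) ≃ₗᵢ[ℝ] EuclideanSpace ℝ (Fin 3))
      (b : EuclideanSpace ℝ (Fin 3)) (φ : ℂ → ℂ),
      0 < s ∧ DifferentiableOn ℂ φ U ∧
      ∀ z ∈ U, X z = s • A (enneper (φ z)) + b := by
  obtain ⟨z₀, hz₀⟩ := hUconn.nonempty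
  -- the quotient f / g' is holomorphic of constant modulus, hence constant
  have hg'd : DifferentiableOn ℂ (deriv g) U := ((hg.analyticOnNhd hU).deriv).differentiableOn
  have hhd : DifferentiableOn ℂ (fun z => f z / deriv g z) U := hf.div hg'd hg'
  have habs : ∀ z ∈ U, ‖f z / deriv g z‖ = c := by
    intro z hz
    rw [norm_div, hconst z hz, mul_div_assoc, div_self (by
      simpa [norm_ne_zero_iff] using hg' z hz), mul_one]
  have hmax : IsMaxOn (norm ∘ (fun z => f z / deriv g z)) U z₀ := by
    rw [isMaxOn_iff]
    intro x hx
    simp only [Function.comp_apply, habs x hx, habs z₀ hz₀, le_refl]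
  have heq : Set.EqOn (fun z => f z / deriv g z)
      (Function.const ℂ (f z₀ / deriv g z₀)) U :=
    Complex.eqOn_of_isPreconnected_of_isMaxOn_norm hUconn.isPreconnected hU hhd hz₀ hmax
  set lam : ℂ := f z₀ / deriv g z₀ with hlamdef
  have hlamabs : ‖lam‖ = c := habs z₀ hz₀
  have hflam : ∀ z ∈ U, f z = lam * deriv g z := by
    intro z hz
    have h1 := heq hz
    simp only [Function.const_apply] at h1
    rwa [div_eq_iff (hg' z hz)] at h1
  -- the unit complex number ω with ω² = lam / c
  set ω : ℂ := Complex.exp ((lam.arg / 2 : ℝ) * I) with hωdef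
  have hωabs : ‖ω‖ = 1 := Complex.norm_exp_ofReal_mul_I _
  have hω2 : ω ^ 2 = lam / (c : ℂ) := by
    have h1 : ω ^ 2 = Complex.exp ((lam.arg : ℂ) * I) := by
      rw [hωdef, pow_two, ← Complex.exp_add]
      congr 1
      push_cast
      ring
    have h2 := Complex.norm_mul_exp_arg_mul_I lam
    rw [hlamabs] at h2
    rw [h1, eq_div_iff (by exact_mod_cast hc.ne' : (c : ℂ) ≠ 0)]
    linear_combination h2
  set a : ℝ := ω.re with ha
  set b : ℝ := -ω.im with hb
  have hnorm : ω.re * ω.re + ω.im * ω.im = 1 := by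
    have h3 := Complex.sq_norm ω
    rw [hωabs] at h3
    simpa [Complex.normSq_apply] using h3.symm
  have hab : a ^ 2 + b ^ 2 = 1 := by rw [ha, hb]; linear_combination hnorm
  have hR2 : ω = (a : ℂ) - (b : ℂ) * I := by
    apply Complex.ext <;> simp [ha, hb]
  have hR1 : ω * ((a : ℂ) + (b : ℂ) * I) = 1 := by
    have hconj : ((a : ℂ) + (b : ℂ) * I) = starRingEnd ℂ ω := by
      apply Complex.ext <;> simp [ha, hb]
    rw [hconj, Complex.mul_conj, ← Complex.sq_norm, hωabs]
    norm_num
  have hlamω : lam = (c : ℂ) * ω ^ 2 := by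
    rw [hω2, mul_comm, div_mul_cancel₀ _ (by exact_mod_cast hc.ne' : (c : ℂ) ≠ 0)]
  have hfz : ∀ z ∈ U, f z = (c : ℂ) * ω ^ 2 * deriv g z := by
    intro z hz
    rw [hflam z hz, hlamω]
  -- the data
  set A := rotIso a b hab with hA
  set Acl : EuclideanSpace ℝ (Fin 3) →L[ℝ] EuclideanSpace ℝ (Fin 3) :=
    (A.toContinuousLinearEquiv : EuclideanSpace ℝ (Fin 3) →L[ℝ] EuclideanSpace ℝ (Fin 3))
    with hAcldef
  have hAcl : ∀ x, Acl x = A x := fun _ => rfl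
  set Y : ℂ → EuclideanSpace ℝ (Fin 3) := fun t => (c / 2) • A (enneper (ω * g t)) with hY
  -- Y has the same derivative as X on U
  have hYd : ∀ z ∈ U, HasFDerivAt Y (fderiv ℝ X z) z := by
    intro z hz
    have hgz : HasDerivAt g (deriv g z) z := (hg.differentiableAt (hU.mem_nhds hz)).hasDerivAt
    have hφz : HasDerivAt (fun t => ω * g t) (ω * deriv g z) z := hgz.const_mul ω
    set w : ℂ := ω * g z with hw
    set dd : ℂ := ω * deriv g z with hdd
    set Ψ : Fin 3 → ℂ := ![(1 - w ^ 2) * dd, I * (1 + w ^ 2) * dd, 2 * w * dd] with hΨ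
    have hH : ∀ j, HasDerivAt
        ((![fun t => ω * g t - (ω * g t) ^ 3 / 3,
            fun t => I * (ω * g t + (ω * g t) ^ 3 / 3),
            fun t => (ω * g t) ^ 2] : Fin 3 → ℂ → ℂ) j) (Ψ j) z := by
      intro j
      fin_cases j
      · have h1 : HasDerivAt (fun u : ℂ => u - u ^ 3 / 3) (1 - w ^ 2) w := by
          have h := (hasDerivAt_id w).sub ((hasDerivAt_pow 3 w).div_const 3)
          have e : (1 : ℂ) - (3 : ℕ) * w ^ (3 - 1) / 3 = 1 - w ^ 2 := by push_cast; ring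
          rw [e] at h
          exact h
        have := h1.comp z hφz
        simpa [Function.comp_def, hΨ, hw, hdd] using this
      · have h1 : HasDerivAt (fun u : ℂ => I * (u + u ^ 3 / 3)) (I * (1 + w ^ 2)) w := by
          have h := ((hasDerivAt_id w).add ((hasDerivAt_pow 3 w).div_const 3)).const_mul I
          have e : I * (1 + (3 : ℕ) * w ^ (3 - 1) / 3) = I * (1 + w ^ 2) := by push_cast; ring
          rw [e] at h
          exact h
        have := h1.comp z hφz
        simpa [Function.comp_def, hΨ, hw, hdd, mul_assoc, mul_comm, mul_left_comm] using this
      · have h1 : HasDerivAt (fun u : ℂ => u ^ 2) (2 * w) w := by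
          have h := hasDerivAt_pow 2 w
          have e : ((2 : ℕ) : ℂ) * w ^ (2 - 1) = 2 * w := by push_cast; ring
          rw [e] at h
          exact h
        have := h1.comp z hφz
        simpa [Function.comp_def, hΨ, hw, hdd, mul_assoc, mul_comm, mul_left_comm] using this
    have hN : HasFDerivAt (fun t => enneper (ω * g t)) (reCLM3 Ψ) z := by
      have h := hasFDerivAt_re3 hH
      have hfun : (fun t => enneper (ω * g t)) =
          (fun t => (WithLp.equiv 2 (Fin 3 → ℝ)).symm
            (fun j => ((![fun t => ω * g t - (ω * g t) ^ 3 / 3,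
              fun t => I * (ω * g t + (ω * g t) ^ 3 / 3),
              fun t => (ω * g t) ^ 2] : Fin 3 → ℂ → ℂ) j t).re)) := by
        funext t
        simp only [enneper]
        congr 1
        funext j
        fin_cases j <;> rfl
      rw [hfun]
      exact h
    have hY' : HasFDerivAt Y ((c / 2) • (Acl.comp (reCLM3 Ψ))) z := by
      have h := (Acl.hasFDerivAt.comp z hN).const_smul (c / 2)
      exact h
    -- identify the derivative with fderiv ℝ X z
    have hfzU := hfz z hz
    have CI0 : Φ z 0 = ((c / 2 : ℝ) : ℂ) * ((a : ℂ) * Ψ 0 - (b : ℂ) * Ψ 1) := by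
      rw [hΦ z]
      simp only [Matrix.cons_val_zero, hΨ, Matrix.cons_val_one, Matrix.head_cons]
      rw [hw, hdd]
      push_cast
      linear_combination ((1 - (g z) ^ 2) / 2) * hfzU
        + ((c : ℂ) / 2 * ω * deriv g z) * hR2
        + ((c : ℂ) / 2 * ω ^ 2 * (g z) ^ 2 * deriv g z) * hR1
    have CI1 : Φ z 1 = ((c / 2 : ℝ) : ℂ) * ((b : ℂ) * Ψ 0 + (a : ℂ) * Ψ 1) := by
      rw [hΦ z]
      simp only [Matrix.cons_val_zero, hΨ, Matrix.cons_val_one, Matrix.head_cons]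
      rw [hw, hdd]
      push_cast
      linear_combination (I * (1 + (g z) ^ 2) / 2) * hfzU
        + ((c : ℂ) / 2 * ω * deriv g z * I) * hR2
        - ((c : ℂ) / 2 * ω ^ 2 * (g z) ^ 2 * deriv g z * I) * hR1
        + ((c : ℂ) * (b : ℂ) * ω * deriv g z * ((g z) ^ 2 * ω ^ 2 - 1) / 2) * Complex.I_sq
    have CI2 : Φ z 2 = ((c / 2 : ℝ) : ℂ) * Ψ 2 := by
      rw [hΦ z]
      simp only [Matrix.cons_val_two, Matrix.tail_cons, Matrix.head_cons, hΨ]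
      rw [hw, hdd]
      push_cast
      linear_combination (g z) * hfzU
    have hEq : ((c / 2 : ℝ) • (Acl.comp (reCLM3 Ψ))) = fderiv ℝ X z := by
      apply clm_ext_complex
      · rw [hXx z hz]
        simp only [ContinuousLinearMap.coe_smul', Pi.smul_apply,
          ContinuousLinearMap.coe_comp', Function.comp_apply, reCLM3_apply]
        rw [hAcl, hA, rotIso_apply]
        ext i
        fin_cases i
        · simp only [PiLp.smul_apply, WithLp.equiv_symm_apply, PiLp.toLp_apply, Matrix.cons_val_zero,
            smul_eq_mul]
          rw [show Φ z ⟨0, by norm_num⟩ = Φ z 0 from rfl, CI0]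
          simp [Complex.mul_re, Complex.mul_im]
          try ring
        · simp only [PiLp.smul_apply, WithLp.equiv_symm_apply, PiLp.toLp_apply, Matrix.cons_val_one,
            Matrix.head_cons, smul_eq_mul]
          rw [show Φ z ⟨1, by norm_num⟩ = Φ z 1 from rfl, CI1]
          simp [Complex.mul_re, Complex.mul_im]
          try ring
        · simp only [PiLp.smul_apply, WithLp.equiv_symm_apply, PiLp.toLp_apply, Matrix.cons_val_two,
            Matrix.tail_cons, Matrix.head_cons, smul_eq_mul]
          rw [show Φ z ⟨2, by norm_num⟩ = Φ z 2 from rfl, CI2]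
          simp [Complex.mul_re, Complex.mul_im]
          try ring
      · rw [hXy z hz]
        simp only [ContinuousLinearMap.coe_smul', Pi.smul_apply,
          ContinuousLinearMap.coe_comp', Function.comp_apply, reCLM3_apply]
        rw [hAcl, hA, rotIso_apply]
        ext i
        fin_cases i
        · simp only [PiLp.smul_apply, WithLp.equiv_symm_apply, PiLp.toLp_apply, Matrix.cons_val_zero,
            smul_eq_mul]
          rw [show Φ z ⟨0, by norm_num⟩ = Φ z 0 from rfl, CI0]
          simp [Complex.mul_re, Complex.mul_im]
          try ring
        · simp only [PiLp.smul_apply, WithLp.equiv_symm_apply, PiLp.toLp_apply, Matrix.cons_val_one,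
            Matrix.head_cons, smul_eq_mul]
          rw [show Φ z ⟨1, by norm_num⟩ = Φ z 1 from rfl, CI1]
          simp [Complex.mul_re, Complex.mul_im]
          try ring
        · simp only [PiLp.smul_apply, WithLp.equiv_symm_apply, PiLp.toLp_apply, Matrix.cons_val_two,
            Matrix.tail_cons, Matrix.head_cons, smul_eq_mul]
          rw [show Φ z ⟨2, by norm_num⟩ = Φ z 2 from rfl, CI2]
          simp [Complex.mul_re, Complex.mul_im]
          try ring
    rw [← hEq]
    exact hY'
  -- conclude by constancy of X - Y
  refine ⟨c / 2, A, X z₀ - Y z₀, fun t => ω * g t, half_pos hc, ?_, ?_⟩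
  · exact hg.const_smul ω
  · intro z hz
    have hsub : ∀ u ∈ U, HasFDerivAt (fun t => X t - Y t) (0 : ℂ →L[ℝ] _) u := by
      intro u hu
      have := ((hXdiff u hu).hasFDerivAt).sub (hYd u hu)
      exact this.congr_fderiv (by simp)
    have hconst2 := const_of_hasFDerivAt_zero hU hUconn.isPreconnected hsub hz₀ hz
    have : X z = Y z + (X z₀ - Y z₀) := by
      have h := hconst2
      abel_nf at h ⊢
      linear_combination (norm := abel) h
    simpa [hY] using this
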